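/- The commutant of A decomposes as the orthogonal direct sum comm(A) = Ψ(𝒟) ⊕ 𝒜₀ with respect to the trace inner product, where 𝒟 is the space of n×n real diagonal matrices, Ψ(𝒟) is its image under Ψ, and 𝒜₀ = {N ∈ comm(A) : N ∘ I = 0} is the set of matrices commuting with A whose diagonal entries are all zero. That is, Ψ(𝒟) ∩ 𝒜₀ = {0}, every element of comm(A) is a sum of an element of Ψ(𝒟) and an element of 𝒜₀, and the two subspaces are orthogonal. -/

import Mathlib

open Matrix BigOperators

lemma symm_matrix_mem_range {n : ℕ} (B : Matrix (Fin n) (Fin n) ℝ) (hB : Bᵀ = B)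
    (w : Fin n → ℝ) (hw : ∀ v : Fin n → ℝ, B.mulVec v = 0 → ∑ i, w i * v i = 0) :
    ∃ v, B.mulVec v = w := by
  classical
  set T : EuclideanSpace ℝ (Fin n) →ₗ[ℝ] EuclideanSpace ℝ (Fin n) :=
    Matrix.toEuclideanLin B with hT
  have hTapp : ∀ v : EuclideanSpace ℝ (Fin n), (T v : Fin n → ℝ) = B.mulVec (v : Fin n → ℝ) := by
    intro v
    rfl
  have hinner : ∀ x y : EuclideanSpace ℝ (Fin n), (inner ℝ x y : ℝ) = ∑ i, x i * y i := by
    intro x y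
    simp [PiLp.inner_apply, RCLike.inner_apply, mul_comm]
  have hsymm : ∀ x y : EuclideanSpace ℝ (Fin n), (inner ℝ (T x) y : ℝ) = inner ℝ x (T y) := by
    intro x y
    rw [hinner, hinner]
    have h1 : ∀ i, (T x) i = B.mulVec x i := fun i => congrFun (hTapp x) i
    have h2 : ∀ i, (T y) i = B.mulVec y i := fun i => congrFun (hTapp y) i
    simp only [h1, h2]
    calc ∑ i, B.mulVec x i * y i = (Bᵀ.mulVec x) ⬝ᵥ (y : Fin n → ℝ) := by rw [hB]; rfl
      _ = ((x : Fin n → ℝ) ᵥ* B) ⬝ᵥ (y : Fin n → ℝ) := by rw [Matrix.mulVec_transpose]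
      _ = (x : Fin n → ℝ) ⬝ᵥ (B.mulVec y) := (Matrix.dotProduct_mulVec _ _ _).symm
      _ = ∑ i, x i * B.mulVec y i := rfl
  have hrange : (LinearMap.range T)ᗮ = LinearMap.ker T := by
    ext x
    simp only [Submodule.mem_orthogonal, LinearMap.mem_range, LinearMap.mem_ker]
    constructor
    · intro h
      have h0 := h (T (T x)) ⟨T x, rfl⟩
      rw [hsymm] at h0
      exact inner_self_eq_zero.mp h0
    · intro h u hu
      obtain ⟨v, rfl⟩ := hu
      rw [hsymm, h, inner_zero_right]
  set w' : EuclideanSpace ℝ (Fin n) := (WithLp.equiv 2 (Fin n → ℝ)).symm w with hw'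
  have hwcoe : (w' : Fin n → ℝ) = w := rfl
  have hwmem : w' ∈ (LinearMap.ker T)ᗮ := by
    rw [Submodule.mem_orthogonal]
    intro u hu
    rw [LinearMap.mem_ker] at hu
    have hu' : B.mulVec (u : Fin n → ℝ) = 0 := by
      funext i
      have := congrFun (hTapp u) i
      rw [hu] at this
      exact this.symm
    rw [real_inner_comm, hinner]
    exact hw u hu'
  rw [← hrange, Submodule.orthogonal_orthogonal] at hwmem
  obtain ⟨v, hv⟩ := hwmem
  refine ⟨v, ?_⟩
  rw [← hTapp v, hv]
  exact hwcoe

/-- The projection `Ψ(M) = ∑ r, E r * M * E r` onto the commutant. -/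
def Psi {n d : ℕ} (E : Fin d → Matrix (Fin n) (Fin n) ℝ)
    (M : Matrix (Fin n) (Fin n) ℝ) : Matrix (Fin n) (Fin n) ℝ :=
  ∑ r, E r * M * E r

/-- The commutant of `A` decomposes as the orthogonal direct sum `Ψ(𝒟) ⊕ 𝒜₀`, where `𝒟`
is the space of diagonal matrices and `𝒜₀` is the space of matrices commuting with `A`
with zero diagonal: the two pieces intersect trivially, every matrix commuting with `A`
is a sum of an element of each, and the two pieces are orthogonal with respect to the
trace inner product. -/
theorem commutant_decomposition (n d : ℕ) (hn : 1 ≤ n)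
    (A : Matrix (Fin n) (Fin n) ℝ) (hA : Aᵀ = A)
    (θ : Fin d → ℝ) (hθ : Function.Injective θ)
    (E : Fin d → Matrix (Fin n) (Fin n) ℝ)
    (hEsymm : ∀ r, (E r)ᵀ = E r)
    (hEidem : ∀ r, E r * E r = E r)
    (hEorth : ∀ r s, r ≠ s → E r * E s = 0)
    (hEsum : ∑ r, E r = 1)
    (hdecomp : A = ∑ r, θ r • E r) :
    (∀ N : Matrix (Fin n) (Fin n) ℝ,
        (∃ D, D.IsDiag ∧ Psi E D = N) →
        (A * N = N * A ∧ ∀ i, N i i = 0) → N = 0) ∧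
      (∀ M : Matrix (Fin n) (Fin n) ℝ, A * M = M * A →
        ∃ D N, D.IsDiag ∧ (A * N = N * A ∧ ∀ i, N i i = 0) ∧ M = Psi E D + N) ∧
      (∀ D N : Matrix (Fin n) (Fin n) ℝ, D.IsDiag →
        (A * N = N * A ∧ ∀ i, N i i = 0) → ((Psi E D)ᵀ * N).trace = 0) := by
  classical
  -- A * E r = θ r • E r
  have hAE : ∀ r, A * E r = θ r • E r := by
    intro r
    rw [hdecomp, Finset.sum_mul, Finset.sum_eq_single r]
    · rw [smul_mul_assoc, hEidem]
    · intro s _ hs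
      rw [smul_mul_assoc, hEorth s r hs, smul_zero]
    · intro h; exact absurd (Finset.mem_univ r) h
  have hEA : ∀ r, E r * A = θ r • E r := by
    intro r
    rw [hdecomp, Finset.mul_sum, Finset.sum_eq_single r]
    · rw [mul_smul_comm, hEidem]
    · intro s _ hs
      rw [mul_smul_comm, hEorth r s (Ne.symm hs), smul_zero]
    · intro h; exact absurd (Finset.mem_univ r) h
  -- cross terms vanish for commuting matrices
  have hcross : ∀ N : Matrix (Fin n) (Fin n) ℝ, A * N = N * A →
      ∀ r s, r ≠ s → E r * (N * E s) = 0 := by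
    intro N hN r s hrs
    have hθne : θ r - θ s ≠ 0 := sub_ne_zero.mpr (fun h => hrs (hθ h))
    have h1 : E r * (A * N) * E s = E r * (N * A) * E s := by rw [hN]
    have hL : E r * (A * N) * E s = θ r • (E r * (N * E s)) := by
      rw [← mul_assoc (E r) A N, hEA r, smul_mul_assoc, smul_mul_assoc, mul_assoc]
    have hR : E r * (N * A) * E s = θ s • (E r * (N * E s)) := by
      rw [mul_assoc, mul_assoc, hAE s, mul_smul_comm, mul_smul_comm]
    have key : (θ r - θ s) • (E r * (N * E s)) = 0 := by
      rw [sub_smul, ← hL, ← hR, h1, sub_self]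
    rcases smul_eq_zero.mp key with h | h
    · exact absurd h hθne
    · exact h
  -- Psi fixes the commutant
  have hfix : ∀ N : Matrix (Fin n) (Fin n) ℝ, A * N = N * A → Psi E N = N := by
    intro N hN
    have hstep : ∀ r, E r * N * (∑ s, E s) = E r * N * E r := by
      intro r
      rw [Finset.mul_sum, Finset.sum_eq_single r]
      · intro s _ hs
        rw [mul_assoc]
        exact hcross N hN r s (Ne.symm hs)
      · intro h; exact absurd (Finset.mem_univ r) h
    calc Psi E N = ∑ r, E r * N * (∑ s, E s) :=
          (Finset.sum_congr rfl (fun r _ => hstep r)).symm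
      _ = (∑ r, E r) * N * (∑ s, E s) := by rw [Finset.sum_mul, Finset.sum_mul]
      _ = N := by rw [hEsum, one_mul, mul_one]
  -- Psi lands in the commutant
  have hPsiComm : ∀ M : Matrix (Fin n) (Fin n) ℝ, A * Psi E M = Psi E M * A := by
    intro M
    rw [Psi, Finset.mul_sum, Finset.sum_mul]
    refine Finset.sum_congr rfl fun r _ => ?_
    calc A * (E r * M * E r) = (A * E r) * M * E r := by rw [← mul_assoc, ← mul_assoc]
      _ = θ r • (E r * M * E r) := by rw [hAE, smul_mul_assoc, smul_mul_assoc]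
      _ = E r * M * (θ r • E r) := by rw [mul_smul_comm]
      _ = E r * M * E r * A := by rw [← hEA, ← mul_assoc]
  -- transpose of Psi
  have hPsiT : ∀ X : Matrix (Fin n) (Fin n) ℝ, (Psi E X)ᵀ = Psi E Xᵀ := by
    intro X
    rw [Psi, Psi, Matrix.transpose_sum]
    refine Finset.sum_congr rfl fun r _ => ?_
    rw [Matrix.transpose_mul, Matrix.transpose_mul, hEsymm, ← mul_assoc]
  -- Psi is self-adjoint for the trace inner product
  have hadj : ∀ X Y : Matrix (Fin n) (Fin n) ℝ,
      ((Psi E X)ᵀ * Y).trace = (Xᵀ * Psi E Y).trace := by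
    intro X Y
    rw [hPsiT, Psi, Psi, Finset.sum_mul, Finset.mul_sum, Matrix.trace_sum, Matrix.trace_sum]
    refine Finset.sum_congr rfl fun r _ => ?_
    calc ((E r * Xᵀ * E r) * Y).trace = ((E r * Xᵀ) * (E r * Y)).trace := by rw [mul_assoc]
      _ = ((E r * Y) * (E r * Xᵀ)).trace := Matrix.trace_mul_comm _ _
      _ = ((E r * Y * E r) * Xᵀ).trace := by rw [← mul_assoc]
      _ = (Xᵀ * (E r * Y * E r)).trace := Matrix.trace_mul_comm _ _
  -- trace pairing with a diagonal matrix
  have hdiagtr : ∀ (D N : Matrix (Fin n) (Fin n) ℝ), D.IsDiag →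
      (Dᵀ * N).trace = ∑ i, D i i * N i i := by
    intro D N hD
    rw [Matrix.trace]
    refine Finset.sum_congr rfl fun i _ => ?_
    rw [Matrix.diag_apply, Matrix.mul_apply, Finset.sum_eq_single i]
    · rw [Matrix.transpose_apply]
    · intro j _ hj
      rw [Matrix.transpose_apply, hD hj, zero_mul]
    · intro h; exact absurd (Finset.mem_univ i) h
  -- a matrix with zero trace inner product with itself is zero
  have hzero : ∀ X : Matrix (Fin n) (Fin n) ℝ, (Xᵀ * X).trace = 0 → X = 0 := by
    intro X hX
    have h1 : ∑ j, ∑ i, X i j * X i j = 0 := by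
      have h : (Xᵀ * X).trace = ∑ j, ∑ i, X i j * X i j := by
        simp [Matrix.trace, Matrix.diag, Matrix.mul_apply]
      rw [← h]; exact hX
    ext i j
    have h2 : ∀ j' ∈ Finset.univ, (0:ℝ) ≤ ∑ i', X i' j' * X i' j' :=
      fun j' _ => Finset.sum_nonneg fun i' _ => mul_self_nonneg _
    have h3 := (Finset.sum_eq_zero_iff_of_nonneg h2).mp h1 j (Finset.mem_univ j)
    have h4 := (Finset.sum_eq_zero_iff_of_nonneg
      (fun i' _ => mul_self_nonneg (X i' j))).mp h3 i (Finset.mem_univ i)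
    simpa using mul_self_eq_zero.mp h4
  -- Part 3
  have hpart3 : ∀ D N : Matrix (Fin n) (Fin n) ℝ, D.IsDiag →
      (A * N = N * A ∧ ∀ i, N i i = 0) → ((Psi E D)ᵀ * N).trace = 0 := by
    intro D N hD h
    obtain ⟨hNc, hNd⟩ := h
    rw [hadj, hfix N hNc, hdiagtr D N hD]
    simp [hNd]
  refine ⟨?_, ?_, hpart3⟩
  · -- Part 1
    rintro N ⟨D, hD, hPD⟩ ⟨hNc, hNd⟩
    have h := hpart3 D N hD ⟨hNc, hNd⟩
    rw [hPD] at h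
    exact hzero N h
  · -- Part 2
    intro M hM
    set B : Matrix (Fin n) (Fin n) ℝ := Matrix.of (fun i j => ∑ r, (E r i j)^2) with hBdef
    have hEs : ∀ r i j, E r j i = E r i j := fun r i j => congrFun (congrFun (hEsymm r) i) j
    have hBsym : Bᵀ = B := by
      ext i j
      show B j i = B i j
      simp only [hBdef, Matrix.of_apply]
      exact Finset.sum_congr rfl fun r _ => by rw [hEs r i j]
    have hPsiD_diag : ∀ (v : Fin n → ℝ) i,
        (Psi E (Matrix.diagonal v)) i i = B.mulVec v i := by
      intro v i
      rw [Psi, Matrix.sum_apply]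
      calc ∑ r, (E r * Matrix.diagonal v * E r) i i
          = ∑ r, ∑ j, E r i j * v j * E r j i := by
            refine Finset.sum_congr rfl fun r _ => ?_
            rw [Matrix.mul_apply]
            refine Finset.sum_congr rfl fun j _ => ?_
            rw [Matrix.mul_diagonal]
        _ = ∑ j, (∑ r, (E r i j)^2) * v j := by
            rw [Finset.sum_comm]
            refine Finset.sum_congr rfl fun j _ => ?_
            rw [Finset.sum_mul]
            refine Finset.sum_congr rfl fun r _ => ?_
            rw [hEs r i j]; ring
        _ = B.mulVec v i := by
            simp [hBdef, Matrix.mulVec, dotProduct]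
    have hkerB : ∀ v : Fin n → ℝ, B.mulVec v = 0 → Psi E (Matrix.diagonal v) = 0 := by
      intro v hv
      have htr : ((Psi E (Matrix.diagonal v))ᵀ * (Psi E (Matrix.diagonal v))).trace = 0 := by
        rw [hadj, hfix _ (hPsiComm _), hdiagtr _ _ (Matrix.isDiag_diagonal v)]
        refine Finset.sum_eq_zero fun i _ => ?_
        rw [hPsiD_diag v i, hv]
        simp
      exact hzero _ htr
    have hwex : ∃ v, B.mulVec v = fun i => M i i := by
      apply symm_matrix_mem_range B hBsym
      intro v hv
      have h1 : ((Matrix.diagonal v)ᵀ * M).trace = 0 := by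
        rw [← hfix M hM, ← hadj, hkerB v hv]
        simp
      rw [hdiagtr (Matrix.diagonal v) M (Matrix.isDiag_diagonal v)] at h1
      rw [← h1]
      refine Finset.sum_congr rfl fun i _ => ?_
      rw [Matrix.diagonal_apply_eq]
      ring
    obtain ⟨v, hv⟩ := hwex
    refine ⟨Matrix.diagonal v, M - Psi E (Matrix.diagonal v),
      Matrix.isDiag_diagonal v, ⟨?_, ?_⟩, ?_⟩
    · rw [mul_sub, sub_mul, hM, hPsiComm]
    · intro i
      rw [Matrix.sub_apply, hPsiD_diag v i, hv]
      simp
    · abel
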